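/- arXiv:1903.12002 — 4 statements merged into one kernel-verified Lean document; each statement's English description precedes it below -/
import Mathlib

section
/- Suppose h₀·W ⊆ W' and h₀·U ⊆ U', and suppose both evaluation maps ψ : W/U → ℂ^δ (defined using h) and ψ' : W'/U' → ℂ^δ (defined using hh₀) are isomorphisms. Then the multiplication map M_{h₀} : W/U → W'/U' sending f + U to h₀f + U' is a well-defined isomorphism of ℂ-vector spaces. -/
open MvPolynomial

/-- If `h₀·W ⊆ W'`, `h₀·U ⊆ U'`, and both evaluation maps `ψ : W/U → ℂ^δ`
(defined using `h`) and `ψ' : W'/U' → ℂ^δ` (defined using `hh₀`) are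
isomorphisms, then the multiplication map `M_{h₀} : W/U → W'/U'`,
`f + U ↦ h₀f + U'`, is a well-defined isomorphism of `ℂ`-vector spaces. -/
theorem mulMap_isomorphism (k δ : ℕ) (z : Fin δ → (Fin k → ℂ))
    (W W' : Submodule ℂ (MvPolynomial (Fin k) ℂ))
    [FiniteDimensional ℂ W] [FiniteDimensional ℂ W']
    (JW : Submodule ℂ W)
    (hJW : ∀ f : W, f ∈ JW ↔ ∀ j, eval (z j) (f : MvPolynomial (Fin k) ℂ) = 0)
    (JW' : Submodule ℂ W')
    (hJW' : ∀ f : W', f ∈ JW' ↔ ∀ j, eval (z j) (f : MvPolynomial (Fin k) ℂ) = 0)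
    (U : Submodule ℂ W) (hU : U ≤ JW)
    (U' : Submodule ℂ W') (hU' : U' ≤ JW')
    (h : MvPolynomial (Fin k) ℂ) (hhW : h ∈ W) (hh : ∀ j, eval (z j) h ≠ 0)
    (h₀ : MvPolynomial (Fin k) ℂ) (hh₀ : ∀ j, eval (z j) h₀ ≠ 0)
    (hmulW : ∀ f ∈ W, h₀ * f ∈ W')
    (hmulU : ∀ f : W, f ∈ U →
      (⟨h₀ * (f : MvPolynomial (Fin k) ℂ), hmulW _ f.2⟩ : W') ∈ U')
    (ψ : (W ⧸ U) →ₗ[ℂ] (Fin δ → ℂ))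
    (hψ : ∀ f : W, ψ (Submodule.Quotient.mk f) =
      fun j => eval (z j) (f : MvPolynomial (Fin k) ℂ) / eval (z j) h)
    (hψbij : Function.Bijective ψ)
    (ψ' : (W' ⧸ U') →ₗ[ℂ] (Fin δ → ℂ))
    (hψ' : ∀ f : W', ψ' (Submodule.Quotient.mk f) =
      fun j => eval (z j) (f : MvPolynomial (Fin k) ℂ) / eval (z j) (h * h₀))
    (hψ'bij : Function.Bijective ψ') :
    ∃ Mh₀ : (W ⧸ U) →ₗ[ℂ] (W' ⧸ U'),
      (∀ f : W, Mh₀ (Submodule.Quotient.mk f) =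
        Submodule.Quotient.mk (⟨h₀ * (f : MvPolynomial (Fin k) ℂ), hmulW _ f.2⟩ : W')) ∧
      Function.Bijective Mh₀ := by
  let e' := LinearEquiv.ofBijective ψ' hψ'bij
  refine ⟨e'.symm.toLinearMap ∘ₗ ψ, ?_, ?_⟩
  · intro f
    have key : ψ' (Submodule.Quotient.mk
        (⟨h₀ * (f : MvPolynomial (Fin k) ℂ), hmulW _ f.2⟩ : W')) =
        ψ (Submodule.Quotient.mk f) := by
      rw [hψ', hψ]
      funext j
      show eval (z j) (h₀ * (f : MvPolynomial (Fin k) ℂ)) / eval (z j) (h * h₀) = _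
      rw [map_mul, map_mul]
      rw [div_eq_div_iff (by exact mul_ne_zero (hh j) (hh₀ j)) (hh j)]
      ring
    have : e' (Submodule.Quotient.mk
        (⟨h₀ * (f : MvPolynomial (Fin k) ℂ), hmulW _ f.2⟩ : W')) =
        ψ (Submodule.Quotient.mk f) := key
    simp only [LinearMap.comp_apply, LinearEquiv.coe_coe, ← this,
      LinearEquiv.symm_apply_apply]
  · exact (e'.symm.bijective).comp hψbij
end

section
/- Suppose h₀·W ⊆ W', h₀·U ⊆ U', g·W ⊆ W', g·U ⊆ U', and suppose both evaluation maps ψ : W/U → ℂ^δ (defined using h) and ψ' : W'/U' → ℂ^δ (defined using hh₀) are isomorphisms. Let ℓ₁,…,ℓ_δ be a set of homogeneous Lagrange polynomials in W with respect to h. Then for every j ∈ {1,…,δ}, the class ℓ_j + U is nonzero in W/U and M_{g/h₀}(ℓ_j + U) = (g(z_j)/h₀(z_j)) · (ℓ_j + U); i.e. the δ right eigenpairs of the multiplication operator M_{g/h₀} : W/U → W/U are ((g/h₀)(z_j), ℓ_j + U), j = 1,…,δ. (Toric eigenvalue, eigenvector theorem, eigenvector part.) -/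
open MvPolynomial

/-- Toric eigenvalue, eigenvector theorem (right eigenpairs): with `h₀·W ⊆ W'`,
`h₀·U ⊆ U'`, `g·W ⊆ W'`, `g·U ⊆ U'`, both evaluation maps `ψ : W/U → ℂ^δ`
(using `h`) and `ψ' : W'/U' → ℂ^δ` (using `hh₀`) isomorphisms, and
`ℓ₁,…,ℓ_δ` a set of homogeneous Lagrange polynomials in `W` with respect to
`h`, for every `j` the class `ℓ_j + U` is nonzero in `W/U` and
`M_{g/h₀}(ℓ_j + U) = (g(z_j)/h₀(z_j))·(ℓ_j + U)`, where
`M_{g/h₀} = M_{h₀}⁻¹ ∘ M_g : W/U → W/U`. -/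
theorem toric_eigenvector_theorem (k δ : ℕ) (z : Fin δ → (Fin k → ℂ))
    (W W' : Submodule ℂ (MvPolynomial (Fin k) ℂ))
    [FiniteDimensional ℂ W] [FiniteDimensional ℂ W']
    (JW : Submodule ℂ W)
    (hJW : ∀ f : W, f ∈ JW ↔ ∀ j, eval (z j) (f : MvPolynomial (Fin k) ℂ) = 0)
    (JW' : Submodule ℂ W')
    (hJW' : ∀ f : W', f ∈ JW' ↔ ∀ j, eval (z j) (f : MvPolynomial (Fin k) ℂ) = 0)
    (U : Submodule ℂ W) (hU : U ≤ JW)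
    (U' : Submodule ℂ W') (hU' : U' ≤ JW')
    (h : MvPolynomial (Fin k) ℂ) (hhW : h ∈ W) (hh : ∀ j, eval (z j) h ≠ 0)
    (h₀ g : MvPolynomial (Fin k) ℂ) (hh₀ : ∀ j, eval (z j) h₀ ≠ 0)
    (hmulW : ∀ f ∈ W, h₀ * f ∈ W')
    (hmulU : ∀ f : W, f ∈ U →
      (⟨h₀ * (f : MvPolynomial (Fin k) ℂ), hmulW _ f.2⟩ : W') ∈ U')
    (hmulWg : ∀ f ∈ W, g * f ∈ W')
    (hmulUg : ∀ f : W, f ∈ U →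
      (⟨g * (f : MvPolynomial (Fin k) ℂ), hmulWg _ f.2⟩ : W') ∈ U')
    (ψ : (W ⧸ U) →ₗ[ℂ] (Fin δ → ℂ))
    (hψ : ∀ f : W, ψ (Submodule.Quotient.mk f) =
      fun j => eval (z j) (f : MvPolynomial (Fin k) ℂ) / eval (z j) h)
    (hψbij : Function.Bijective ψ)
    (ψ' : (W' ⧸ U') →ₗ[ℂ] (Fin δ → ℂ))
    (hψ' : ∀ f : W', ψ' (Submodule.Quotient.mk f) =
      fun j => eval (z j) (f : MvPolynomial (Fin k) ℂ) / eval (z j) (h * h₀))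
    (hψ'bij : Function.Bijective ψ')
    (ℓ : Fin δ → W)
    (hℓ0 : ∀ i j, i ≠ j → eval (z i) ((ℓ j : MvPolynomial (Fin k) ℂ)) = 0)
    (hℓ1 : ∀ j, eval (z j) ((ℓ j : MvPolynomial (Fin k) ℂ)) = eval (z j) h)
    (Mh₀ Mg : (W ⧸ U) →ₗ[ℂ] (W' ⧸ U'))
    (hMh₀ : ∀ f : W, Mh₀ (Submodule.Quotient.mk f) =
      Submodule.Quotient.mk (⟨h₀ * (f : MvPolynomial (Fin k) ℂ), hmulW _ f.2⟩ : W'))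
    (hMh₀bij : Function.Bijective Mh₀)
    (hMg : ∀ f : W, Mg (Submodule.Quotient.mk f) =
      Submodule.Quotient.mk (⟨g * (f : MvPolynomial (Fin k) ℂ), hmulWg _ f.2⟩ : W'))
    (Mgh₀ : Module.End ℂ (W ⧸ U))
    (hMgh₀ : ∀ x, Mh₀ (Mgh₀ x) = Mg x) :
    ∀ j, Module.End.HasEigenvector Mgh₀ (eval (z j) g / eval (z j) h₀)
      (Submodule.Quotient.mk (ℓ j)) := by
  intro j
  have hne : (Submodule.Quotient.mk (ℓ j) : W ⧸ U) ≠ 0 := by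
    intro h0
    have h1 := hψ (ℓ j)
    rw [h0, map_zero] at h1
    have h2 := congrFun h1.symm j
    rw [hℓ1 j, div_self (hh j)] at h2
    exact one_ne_zero h2
  refine ⟨Module.End.mem_eigenspace_iff.mpr ?_, hne⟩
  apply hMh₀bij.injective
  rw [hMgh₀, map_smul, hMh₀, hMg]
  apply hψ'bij.injective
  rw [map_smul, hψ', hψ']
  funext i
  by_cases hij : i = j
  · subst hij
    simp only [Pi.smul_apply, smul_eq_mul, map_mul]
    rw [hℓ1 i]
    field_simp [hh i, hh₀ i]
  · simp [hℓ0 i j hij, map_mul]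
end

section
/- Suppose h₀·W ⊆ W', h₀·U ⊆ U', g·W ⊆ W', g·U ⊆ U', and suppose both evaluation maps ψ : W/U → ℂ^δ (defined using h) and ψ' : W'/U' → ℂ^δ (defined using hh₀) are isomorphisms. For each j define the functional v_j : W/U → ℂ by v_j(f + U) = f(z_j)/h(z_j). Then for every j ∈ {1,…,δ}, v_j is nonzero and v_j ∘ M_{g/h₀} = (g(z_j)/h₀(z_j)) · v_j; i.e. the δ left eigenpairs of the multiplication operator M_{g/h₀} : W/U → W/U are (v_j, (g/h₀)(z_j)), j = 1,…,δ. (Toric eigenvalue, eigenvector theorem, left eigenvector part.) -/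
open MvPolynomial

/-- Toric eigenvalue, eigenvector theorem (left eigenpairs): with `h₀·W ⊆ W'`,
`h₀·U ⊆ U'`, `g·W ⊆ W'`, `g·U ⊆ U'`, and both evaluation maps `ψ : W/U → ℂ^δ`
(using `h`) and `ψ' : W'/U' → ℂ^δ` (using `hh₀`) isomorphisms, for every `j`
the functional `v_j : W/U → ℂ`, `f + U ↦ f(z_j)/h(z_j)`, is nonzero and
satisfies `v_j ∘ M_{g/h₀} = (g(z_j)/h₀(z_j))·v_j`, where
`M_{g/h₀} = M_{h₀}⁻¹ ∘ M_g : W/U → W/U`. -/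
theorem toric_left_eigenvector_theorem (k δ : ℕ) (z : Fin δ → (Fin k → ℂ))
    (W W' : Submodule ℂ (MvPolynomial (Fin k) ℂ))
    [FiniteDimensional ℂ W] [FiniteDimensional ℂ W']
    (JW : Submodule ℂ W)
    (hJW : ∀ f : W, f ∈ JW ↔ ∀ j, eval (z j) (f : MvPolynomial (Fin k) ℂ) = 0)
    (JW' : Submodule ℂ W')
    (hJW' : ∀ f : W', f ∈ JW' ↔ ∀ j, eval (z j) (f : MvPolynomial (Fin k) ℂ) = 0)
    (U : Submodule ℂ W) (hU : U ≤ JW)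
    (U' : Submodule ℂ W') (hU' : U' ≤ JW')
    (h : MvPolynomial (Fin k) ℂ) (hhW : h ∈ W) (hh : ∀ j, eval (z j) h ≠ 0)
    (h₀ g : MvPolynomial (Fin k) ℂ) (hh₀ : ∀ j, eval (z j) h₀ ≠ 0)
    (hmulW : ∀ f ∈ W, h₀ * f ∈ W')
    (hmulU : ∀ f : W, f ∈ U →
      (⟨h₀ * (f : MvPolynomial (Fin k) ℂ), hmulW _ f.2⟩ : W') ∈ U')
    (hmulWg : ∀ f ∈ W, g * f ∈ W')
    (hmulUg : ∀ f : W, f ∈ U →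
      (⟨g * (f : MvPolynomial (Fin k) ℂ), hmulWg _ f.2⟩ : W') ∈ U')
    (ψ : (W ⧸ U) →ₗ[ℂ] (Fin δ → ℂ))
    (hψ : ∀ f : W, ψ (Submodule.Quotient.mk f) =
      fun j => eval (z j) (f : MvPolynomial (Fin k) ℂ) / eval (z j) h)
    (hψbij : Function.Bijective ψ)
    (ψ' : (W' ⧸ U') →ₗ[ℂ] (Fin δ → ℂ))
    (hψ' : ∀ f : W', ψ' (Submodule.Quotient.mk f) =
      fun j => eval (z j) (f : MvPolynomial (Fin k) ℂ) / eval (z j) (h * h₀))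
    (hψ'bij : Function.Bijective ψ')
    (Mh₀ Mg : (W ⧸ U) →ₗ[ℂ] (W' ⧸ U'))
    (hMh₀ : ∀ f : W, Mh₀ (Submodule.Quotient.mk f) =
      Submodule.Quotient.mk (⟨h₀ * (f : MvPolynomial (Fin k) ℂ), hmulW _ f.2⟩ : W'))
    (hMh₀bij : Function.Bijective Mh₀)
    (hMg : ∀ f : W, Mg (Submodule.Quotient.mk f) =
      Submodule.Quotient.mk (⟨g * (f : MvPolynomial (Fin k) ℂ), hmulWg _ f.2⟩ : W'))
    (Mgh₀ : Module.End ℂ (W ⧸ U))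
    (hMgh₀ : ∀ x, Mh₀ (Mgh₀ x) = Mg x)
    (v : Fin δ → ((W ⧸ U) →ₗ[ℂ] ℂ))
    (hv : ∀ j, ∀ f : W, v j (Submodule.Quotient.mk f) =
      eval (z j) (f : MvPolynomial (Fin k) ℂ) / eval (z j) h) :
    ∀ j, v j ≠ 0 ∧ (v j) ∘ₗ Mgh₀ = (eval (z j) g / eval (z j) h₀) • v j := by
  intro j
  constructor
  · intro hzero
    have h1 := hv j ⟨h, hhW⟩
    rw [hzero] at h1
    simp only [LinearMap.zero_apply] at h1
    rw [div_self (hh j)] at h1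
    exact one_ne_zero h1.symm
  · apply LinearMap.ext
    intro x
    obtain ⟨f, rfl⟩ := Submodule.Quotient.mk_surjective U x
    obtain ⟨f', hf'⟩ := Submodule.Quotient.mk_surjective U (Mgh₀ (Submodule.Quotient.mk f))
    have key : Mh₀ (Submodule.Quotient.mk f') = Mg (Submodule.Quotient.mk f) := by
      rw [hf', hMgh₀]
    rw [hMh₀, hMg] at key
    have keyψ : ψ' (Submodule.Quotient.mk
        (⟨h₀ * (f' : MvPolynomial (Fin k) ℂ), hmulW _ f'.2⟩ : W')) =
        ψ' (Submodule.Quotient.mk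
        (⟨g * (f : MvPolynomial (Fin k) ℂ), hmulWg _ f.2⟩ : W')) := by rw [key]
    rw [hψ', hψ'] at keyψ
    have keyj := congrFun keyψ j
    simp only [map_mul] at keyj
    have hhj := hh j
    have hh₀j := hh₀ j
    have e1 : eval (z j) (f' : MvPolynomial (Fin k) ℂ) / eval (z j) h =
        eval (z j) g / eval (z j) h₀ *
        (eval (z j) (f : MvPolynomial (Fin k) ℂ) / eval (z j) h) := by
      field_simp at keyj ⊢
      linear_combination keyj
    simp only [LinearMap.comp_apply, LinearMap.smul_apply, smul_eq_mul, ← hf']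
    rw [hv j f', hv j f, e1]
end

section
/- Suppose h₀·W ⊆ W', h₀·U ⊆ U', and suppose both evaluation maps ψ : W/U → ℂ^δ (defined using h) and ψ' : W'/U' → ℂ^δ (defined using hh₀) are isomorphisms; in particular dim_ℂ(W/U) = dim_ℂ(W'/U') = δ. Let N : W' → ℂ^δ be a surjective linear map with ker N = U', let N_{h₀} : W → ℂ^δ be the map f ↦ N(h₀f), let B ⊆ W be a subspace such that the restriction N* := (N_{h₀})|_B : B → ℂ^δ is bijective. Then: (i) the map ν : B → W/U sending b to b + U is an isomorphism of ℂ-vector spaces; (ii) for any polynomial g with g·W ⊆ W' and g·U ⊆ U', setting N_g : B → ℂ^δ, f ↦ N(gf), one has ν ∘ (N*)^{-1} ∘ N_g = M_{g/h₀} ∘ ν, where M_{g/h₀} := M_{h₀}^{-1} ∘ M_g : W/U → W/U. -/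
open MvPolynomial

/-- With `h₀·W ⊆ W'`, `h₀·U ⊆ U'`, both evaluation maps `ψ : W/U → ℂ^δ` (using
`h`) and `ψ' : W'/U' → ℂ^δ` (using `hh₀`) isomorphisms, `N : W' → ℂ^δ` a
surjective linear map with `ker N = U'`, and `B ⊆ W` a subspace on which
`N* = (N_{h₀})|_B : B → ℂ^δ`, `f ↦ N(h₀f)`, is bijective: (i) the map
`ν : B → W/U`, `b ↦ b + U`, is an isomorphism of `ℂ`-vector spaces; and
(ii) for `g` with `g·W ⊆ W'` and `g·U ⊆ U'`, setting `N_g : B → ℂ^δ`,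
`f ↦ N(gf)`, one has `ν ∘ (N*)⁻¹ ∘ N_g = M_{g/h₀} ∘ ν`, where
`M_{g/h₀} = M_{h₀}⁻¹ ∘ M_g : W/U → W/U`. -/
theorem multiplication_matrices_from_cokernel (k δ : ℕ) (z : Fin δ → (Fin k → ℂ))
    (W W' : Submodule ℂ (MvPolynomial (Fin k) ℂ))
    [FiniteDimensional ℂ W] [FiniteDimensional ℂ W']
    (JW : Submodule ℂ W)
    (hJW : ∀ f : W, f ∈ JW ↔ ∀ j, eval (z j) (f : MvPolynomial (Fin k) ℂ) = 0)
    (JW' : Submodule ℂ W')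
    (hJW' : ∀ f : W', f ∈ JW' ↔ ∀ j, eval (z j) (f : MvPolynomial (Fin k) ℂ) = 0)
    (U : Submodule ℂ W) (hU : U ≤ JW)
    (U' : Submodule ℂ W') (hU' : U' ≤ JW')
    (h : MvPolynomial (Fin k) ℂ) (hhW : h ∈ W) (hh : ∀ j, eval (z j) h ≠ 0)
    (h₀ g : MvPolynomial (Fin k) ℂ) (hh₀ : ∀ j, eval (z j) h₀ ≠ 0)
    (hmulW : ∀ f ∈ W, h₀ * f ∈ W')
    (hmulU : ∀ f : W, f ∈ U →
      (⟨h₀ * (f : MvPolynomial (Fin k) ℂ), hmulW _ f.2⟩ : W') ∈ U')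
    (hmulWg : ∀ f ∈ W, g * f ∈ W')
    (hmulUg : ∀ f : W, f ∈ U →
      (⟨g * (f : MvPolynomial (Fin k) ℂ), hmulWg _ f.2⟩ : W') ∈ U')
    (ψ : (W ⧸ U) →ₗ[ℂ] (Fin δ → ℂ))
    (hψ : ∀ f : W, ψ (Submodule.Quotient.mk f) =
      fun j => eval (z j) (f : MvPolynomial (Fin k) ℂ) / eval (z j) h)
    (hψbij : Function.Bijective ψ)
    (ψ' : (W' ⧸ U') →ₗ[ℂ] (Fin δ → ℂ))
    (hψ' : ∀ f : W', ψ' (Submodule.Quotient.mk f) =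
      fun j => eval (z j) (f : MvPolynomial (Fin k) ℂ) / eval (z j) (h * h₀))
    (hψ'bij : Function.Bijective ψ')
    (N : W' →ₗ[ℂ] (Fin δ → ℂ)) (hNsurj : Function.Surjective N)
    (hNker : LinearMap.ker N = U')
    (B : Submodule ℂ W)
    (Nstar : B ≃ₗ[ℂ] (Fin δ → ℂ))
    (hNstar : ∀ b : B, Nstar b =
      N (⟨h₀ * ((b : W) : MvPolynomial (Fin k) ℂ), hmulW _ (b : W).2⟩ : W'))
    (Mh₀ Mg : (W ⧸ U) →ₗ[ℂ] (W' ⧸ U'))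
    (hMh₀ : ∀ f : W, Mh₀ (Submodule.Quotient.mk f) =
      Submodule.Quotient.mk (⟨h₀ * (f : MvPolynomial (Fin k) ℂ), hmulW _ f.2⟩ : W'))
    (hMh₀bij : Function.Bijective Mh₀)
    (hMg : ∀ f : W, Mg (Submodule.Quotient.mk f) =
      Submodule.Quotient.mk (⟨g * (f : MvPolynomial (Fin k) ℂ), hmulWg _ f.2⟩ : W'))
    (Mgh₀ : Module.End ℂ (W ⧸ U))
    (hMgh₀ : ∀ x, Mh₀ (Mgh₀ x) = Mg x) :
    Function.Bijective (fun b : B => (Submodule.Quotient.mk (b : W) : W ⧸ U)) ∧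
      ∀ b : B,
        (Submodule.Quotient.mk
          ((Nstar.symm (N (⟨g * ((b : W) : MvPolynomial (Fin k) ℂ),
            hmulWg _ (b : W).2⟩ : W')) : W)) : W ⧸ U) =
        Mgh₀ (Submodule.Quotient.mk (b : W)) := by
  classical
  -- N̄ : W'/U' → ℂ^δ induced by N
  set Nbar : (W' ⧸ U') →ₗ[ℂ] (Fin δ → ℂ) :=
    Submodule.liftQ U' N (le_of_eq hNker.symm) with hNbar
  have hNbar_mk : ∀ x : W', Nbar (Submodule.Quotient.mk x) = N x := fun x => rfl
  have hNbar_inj : Function.Injective Nbar := by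
    rw [← LinearMap.ker_eq_bot]
    ext x
    simp only [LinearMap.mem_ker, Submodule.mem_bot]
    constructor
    · intro hx
      obtain ⟨y, rfl⟩ := Submodule.Quotient.mk_surjective U' x
      · rw [hNbar_mk] at hx
        rw [Submodule.Quotient.mk_eq_zero]
        rw [← hNker]; exact hx
    · rintro rfl; simp
  -- key: N̄ (Mh₀ (mk b)) = Nstar b
  have key : ∀ b : B, Nbar (Mh₀ (Submodule.Quotient.mk (b : W))) = Nstar b := by
    intro b
    rw [hMh₀, hNbar_mk, hNstar]
  have hT_inj : Function.Injective fun x : W ⧸ U => Nbar (Mh₀ x) :=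
    hNbar_inj.comp hMh₀bij.1
  have hν_bij : Function.Bijective
      (fun b : B => (Submodule.Quotient.mk (b : W) : W ⧸ U)) := by
    constructor
    · intro b1 b2 hb
      apply Nstar.injective
      rw [← key, ← key]
      simp only [hb]
    · intro x
      refine ⟨Nstar.symm (Nbar (Mh₀ x)), hT_inj ?_⟩
      show Nbar (Mh₀ (Submodule.Quotient.mk _)) = Nbar (Mh₀ x)
      rw [key, Nstar.apply_symm_apply]
  refine ⟨hν_bij, fun b => ?_⟩
  apply hT_inj
  show Nbar (Mh₀ _) = Nbar (Mh₀ _)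
  rw [key, Nstar.apply_symm_apply, hMgh₀, hMg, hNbar_mk]
end
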